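/- Let δ_j = C(n−k, r−j)·C(k, j)/C(n, r) (the probability that a uniformly random weight-r point of {0,1}^n has exactly j ones among its first k coordinates). If r·k ≤ n·ln(1/ε) and r ≤ n/2, then δ_j ≤ (2·ln(1/ε))^j / j! for every j with 0 ≤ j ≤ min(r,k). -/

import Mathlib

/-- Bound on the hypergeometric probabilities `δ_j = C(n-k,r-j)·C(k,j)/C(n,r)`:
if `rk ≤ n·ln(1/ε)` and `r ≤ n/2` then `δ_j ≤ (2 ln(1/ε))^j / j!`. -/
theorem hypergeometric_bound (n k r : ℕ) (hkn : k ≤ n) (hr : r ≤ n - k)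
    (hr2 : 2 * r ≤ n) (ε : ℝ) (hε0 : 0 < ε) (hε1 : ε < 1)
    (hrk : (r : ℝ) * k ≤ (n : ℝ) * Real.log (1 / ε)) :
    ∀ j : ℕ, j ≤ min r k →
      (((n - k).choose (r - j) : ℝ) * (k.choose j : ℝ)) / (n.choose r : ℝ)
        ≤ (2 * Real.log (1 / ε)) ^ j / (j.factorial : ℝ) := by
  intro j hj
  have hjr : j ≤ r := le_trans hj (min_le_left _ _)
  have hjk : j ≤ k := le_trans hj (min_le_right _ _)
  have hrn : r ≤ n := le_trans hr (Nat.sub_le _ _)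
  have hL : 0 < Real.log (1 / ε) := Real.log_pos (one_lt_one_div hε0 hε1)
  have hCnr : (0 : ℝ) < (n.choose r : ℝ) := by exact_mod_cast Nat.choose_pos hrn
  rcases Nat.eq_zero_or_pos j with hj0 | hjpos
  · subst hj0
    simp only [Nat.sub_zero, Nat.choose_zero_right, Nat.cast_one, mul_one, pow_zero,
      Nat.factorial_zero]
    rw [show (1:ℝ)/1 = 1 by norm_num, div_le_one hCnr]
    exact_mod_cast Nat.choose_le_choose r (Nat.sub_le n k)
  · have hn : 0 < n := lt_of_lt_of_le (lt_of_lt_of_le hjpos hjk) hkn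
    have hnR : (0 : ℝ) < (n : ℝ) := by exact_mod_cast hn
    have hCnj : (0 : ℝ) < (n.choose j : ℝ) := by
      exact_mod_cast Nat.choose_pos (le_trans hjr hrn)
    have hfac : (0 : ℝ) < (j.factorial : ℝ) := by exact_mod_cast j.factorial_pos
    have hhalf : (0 : ℝ) < ((n : ℝ) / 2) ^ j / (j.factorial : ℝ) := by positivity
    -- denominator lower bound : (n/2)^j / j! ≤ C(n,j)
    have hbase : (n : ℝ) / 2 ≤ ((n + 1 - j : ℕ) : ℝ) := by
      rw [Nat.cast_sub (by omega)]
      push_cast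
      have : 2 * (j : ℝ) ≤ (n : ℝ) := by
        exact_mod_cast le_trans (by omega : 2 * j ≤ 2 * r) hr2
      linarith
    have hden : ((n : ℝ) / 2) ^ j / (j.factorial : ℝ) ≤ (n.choose j : ℝ) := by
      refine le_trans ?_ (Nat.pow_le_choose j n)
      have := pow_le_pow_left₀ (by positivity : (0:ℝ) ≤ (n:ℝ)/2) hbase j
      exact div_le_div_of_nonneg_right this hfac.le |>.trans_eq rfl
    calc (((n - k).choose (r - j) : ℝ) * (k.choose j : ℝ)) / (n.choose r : ℝ)
        ≤ (((n - j).choose (r - j) : ℝ) * (k.choose j : ℝ)) / (n.choose r : ℝ) := by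
          gcongr
      _ = ((r.choose j : ℝ) * (k.choose j : ℝ)) / (n.choose j : ℝ) := by
          rw [div_eq_div_iff hCnr.ne' hCnj.ne']
          have := Nat.choose_mul (n := n) hjr
          have hcast : (n.choose r : ℝ) * (r.choose j : ℝ)
              = (n.choose j : ℝ) * ((n - j).choose (r - j) : ℝ) := by exact_mod_cast this
          nlinarith [hcast]
      _ ≤ (((r : ℝ) ^ j / (j.factorial : ℝ)) * ((k : ℝ) ^ j / (j.factorial : ℝ)))
            / (((n : ℝ) / 2) ^ j / (j.factorial : ℝ)) := by
          refine div_le_div₀ (by positivity) ?_ hhalf hden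
          exact mul_le_mul (Nat.choose_le_pow_div j r) (Nat.choose_le_pow_div j k)
            (Nat.cast_nonneg _) (by positivity)
      _ = (2 * (r : ℝ) * (k : ℝ) / (n : ℝ)) ^ j / (j.factorial : ℝ) := by
          field_simp [hnR.ne']
          have h2 : ((n:ℝ))^j * (n:ℝ)⁻¹^j = 1 := by rw [← mul_pow, mul_inv_cancel₀ hnR.ne', one_pow]
          have h3 : ((1:ℝ)/2)^j * 2^j = 1 := by rw [← mul_pow]; norm_num
          linear_combination (-((r:ℝ)^j * (k:ℝ)^j) * (((1:ℝ)/2)^j * 2^j)) * h2 + (-((r:ℝ)^j * (k:ℝ)^j)) * h3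
      _ ≤ (2 * Real.log (1 / ε)) ^ j / (j.factorial : ℝ) := by
          have hbound : 2 * (r : ℝ) * (k : ℝ) / (n : ℝ) ≤ 2 * Real.log (1 / ε) := by
            rw [div_le_iff₀ hnR]
            calc 2 * (r : ℝ) * (k : ℝ) = 2 * ((r : ℝ) * k) := by ring
              _ ≤ 2 * ((n : ℝ) * Real.log (1 / ε)) := by linarith
              _ = 2 * Real.log (1 / ε) * (n : ℝ) := by ring
          exact div_le_div_of_nonneg_right (pow_le_pow_left₀ (by positivity) hbound j) hfac.le
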